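/- For all k ≥ 1: if 0 ≤ j ≤ 2k then L_{k+1}^{j+1}(1) - L_k^j(1) = 1; if 2k ≤ j ≤ 3k then L_{k+1}^{j+1}(1) - L_k^j(1) = -(j-2k-1)(j-2k+2)/2. In particular L_{k+1}^{2k+2}(1) = L_k^{2k+1}(1). Moreover, for all j ≥ 2k+2, L_{k+1}^{j+1}(1) < L_k^j(1). -/
import Mathlib


/-- The substitution τ_k, applied to a single letter: τ_k(k) = k1 and τ_k(i) = i+1 for i ≠ k. -/
def tauLetter (k i : ℕ) : List ℕ := if i = k then [k, 1] else [i + 1]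

/-- The substitution τ_k, extended to finite words (lists of letters) by concatenation. -/
def tauWord (k : ℕ) (w : List ℕ) : List ℕ := w.flatMap (tauLetter k)

/-- The infinite fixed point x_k of τ_k (starting with the letter k): its n-th letter is the
n-th letter of any sufficiently long iterate τ_k^j(k), here j = n+1. -/
def xk (k n : ℕ) : ℕ := ((tauWord k)^[n + 1] [k]).getD n 0

/-- L_k(n) = |τ_k(x_k[0:n))|, the length of the τ_k-image of the prefix of x_k of length n. -/
def Lk (k n : ℕ) : ℕ := (tauWord k ((List.range n).map (xk k))).length

/-- C_k^{(=i)}(n): the number of occurrences of the letter i among x_k[0],...,x_k[n-1]. -/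
def Ceq (k i n : ℕ) : ℕ := ((Finset.range n).filter (fun m => xk k m = i)).card

/-- C_k^{(>j)}(n): the number of positions m < n with x_k[m] > j. -/
def Cgt (k j n : ℕ) : ℕ := ((Finset.range n).filter (fun m => j < xk k m)).card

/-- Values of L_{k+1}^{j+1}(1) - L_k^j(1): equal to 1 for 0 ≤ j ≤ 2k, equal to
-(j-2k-1)(j-2k+2)/2 for 2k ≤ j ≤ 3k; in particular L_{k+1}^{2k+2}(1) = L_k^{2k+1}(1);
moreover L_{k+1}^{j+1}(1) < L_k^j(1) for all j ≥ 2k+2. -/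
def fseq (k : ℕ) : ℕ → ℕ
  | 0 => 1
  | j+1 => if j + 1 ≤ k then j + 2 else fseq k j + fseq k (j - (k-1))
termination_by j => j
decreasing_by all_goals simp_wf <;> omega

lemma fseq_of_le {k j : ℕ} (h : j ≤ k) : fseq k j = j + 1 := by
  cases j with
  | zero => simp [fseq]
  | succ m => rw [fseq]; simp [h]

lemma fseq_of_gt {k j : ℕ} (hk : 1 ≤ k) (h : k < j) :
    fseq k j = fseq k (j-1) + fseq k (j-k) := by
  obtain ⟨m, rfl⟩ : ∃ m, j = m + 1 := ⟨j - 1, by omega⟩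
  have hnot : ¬ (m + 1 ≤ k) := by omega
  rw [fseq]
  simp only [hnot, if_false]
  have e1 : m + 1 - 1 = m := rfl
  have e2 : m - (k-1) = m + 1 - k := by omega
  rw [e1, e2]

lemma tauWord_append (k : ℕ) (a b : List ℕ) :
    tauWord k (a ++ b) = tauWord k a ++ tauWord k b := by
  simp [tauWord]

lemma tauWord_iter_append (k j : ℕ) (a b : List ℕ) :
    (tauWord k)^[j] (a ++ b) = (tauWord k)^[j] a ++ (tauWord k)^[j] b := by
  induction j generalizing a b with
  | zero => rfl
  | succ n ih => simp only [Function.iterate_succ_apply, tauWord_append, ih]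

lemma tauWord_iter_letter (k : ℕ) : ∀ m i, 1 ≤ i → i + m ≤ k → (tauWord k)^[m] [i] = [i + m] := by
  intro m
  induction m with
  | zero => intro i _ _; simp
  | succ n ih =>
    intro i hi h
    have hik : i ≠ k := by omega
    rw [Function.iterate_succ_apply]
    have h1 : tauWord k [i] = [i+1] := by simp [tauWord, tauLetter, hik]
    rw [h1, ih (i+1) (by omega) (by omega)]
    congr 1
    omega

lemma tauWord_k (k : ℕ) : tauWord k [k] = [k] ++ [1] := by
  simp [tauWord, tauLetter]

lemma iter_succ_k (k j : ℕ) :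
    (tauWord k)^[j+1] [k] = (tauWord k)^[j] [k] ++ (tauWord k)^[j] [1] := by
  rw [Function.iterate_succ_apply, tauWord_k k, tauWord_iter_append]

lemma iter_one (k j : ℕ) (hk : 1 ≤ k) (h : k - 1 ≤ j) :
    (tauWord k)^[j] [1] = (tauWord k)^[j - (k-1)] [k] := by
  have h1 : (tauWord k)^[k-1] [1] = [k] := by
    have := tauWord_iter_letter k (k-1) 1 le_rfl (by omega)
    rw [this]
    congr 1
    omega
  conv_lhs => rw [show j = (j - (k-1)) + (k-1) by omega]
  rw [Function.iterate_add_apply, h1]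

lemma len_iter (k : ℕ) (hk : 1 ≤ k) : ∀ j, ((tauWord k)^[j] [k]).length = fseq k j := by
  intro j
  induction j using Nat.strong_induction_on with
  | _ j ih =>
    match j with
    | 0 => simp [fseq]
    | j+1 =>
      rw [iter_succ_k k j, List.length_append, ih j (by omega)]
      by_cases h : j + 1 ≤ k
      · have h2 : (tauWord k)^[j] [1] = [1 + j] := tauWord_iter_letter k j 1 le_rfl (by omega)
        rw [h2, fseq_of_le (show j ≤ k by omega), fseq_of_le h]
        simp
      · rw [iter_one k j hk (by omega), ih (j - (k-1)) (by omega),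
            fseq_of_gt hk (show k < j + 1 by omega)]
        have e1 : j + 1 - 1 = j := rfl
        have e2 : j - (k-1) = j + 1 - k := by omega
        rw [e1, e2]

lemma fseq_ge (k : ℕ) (hk : 1 ≤ k) : ∀ j, j + 1 ≤ fseq k j := by
  intro j
  induction j using Nat.strong_induction_on with
  | _ j ih =>
    by_cases h : j ≤ k
    · rw [fseq_of_le h]
    · rw [fseq_of_gt hk (by omega)]
      have h1 := ih (j-1) (by omega)
      have h2 := ih (j-k) (by omega)
      omega

lemma iter_prefix (k : ℕ) {m n : ℕ} (h : m ≤ n) :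
    (tauWord k)^[m] [k] <+: (tauWord k)^[n] [k] := by
  induction n, h using Nat.le_induction with
  | base => exact List.prefix_refl _
  | succ n hmn ih =>
    refine ih.trans ?_
    rw [iter_succ_k k n]
    exact List.prefix_append _ _

lemma getD_of_prefix {l l' : List ℕ} (h : l <+: l') {n : ℕ} (hn : n < l.length) :
    l.getD n 0 = l'.getD n 0 := by
  rw [List.getD_eq_getElem _ _ hn, List.getD_eq_getElem _ _ (hn.trans_le h.length_le)]
  exact List.IsPrefix.getElem h hn

lemma xk_eq (k : ℕ) (hk : 1 ≤ k) {j n : ℕ} (hn : n < ((tauWord k)^[j] [k]).length) :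
    xk k n = ((tauWord k)^[j] [k]).getD n 0 := by
  unfold xk
  have hlen : n < ((tauWord k)^[n+1] [k]).length := by
    rw [len_iter k hk]
    have := fseq_ge k hk (n+1)
    omega
  rcases le_total (n+1) j with h | h
  · exact getD_of_prefix (iter_prefix k h) hlen
  · exact (getD_of_prefix (iter_prefix k h) hn).symm

lemma range_map_xk (k : ℕ) (hk : 1 ≤ k) (j : ℕ) :
    (List.range (((tauWord k)^[j] [k]).length)).map (xk k) = (tauWord k)^[j] [k] := by
  apply List.ext_getElem
  · simp
  · intro n h1 h2
    simp only [List.getElem_map, List.getElem_range]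
    rw [xk_eq k hk h2, List.getD_eq_getElem _ _ h2]

lemma Lk_iter (k : ℕ) (hk : 1 ≤ k) (j : ℕ) : (Lk k)^[j] 1 = fseq k j := by
  induction j with
  | zero => simp [fseq]
  | succ n ih =>
    rw [Function.iterate_succ_apply', ih, ← len_iter k hk n]
    unfold Lk
    rw [range_map_xk k hk n, ← Function.iterate_succ_apply' (tauWord k) n [k],
      len_iter k hk]

lemma fseq_step (k : ℕ) (hk : 1 ≤ k) (j : ℕ) : fseq k j ≤ fseq k (j+1) := by
  by_cases h : j + 1 ≤ k
  · rw [fseq_of_le h, fseq_of_le (by omega)]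
    omega
  · rw [fseq_of_gt hk (show k < j + 1 by omega)]
    have e1 : j + 1 - 1 = j := rfl
    rw [e1]
    omega

lemma fseq_mono (k : ℕ) (hk : 1 ≤ k) {a b : ℕ} (h : a ≤ b) : fseq k a ≤ fseq k b := by
  induction b, h using Nat.le_induction with
  | base => exact le_refl _
  | succ n hmn ih => exact ih.trans (fseq_step k hk n)

lemma fseq_kp1 (k : ℕ) (hk : 1 ≤ k) : fseq k (k+1) = k + 3 := by
  rw [fseq_of_gt hk (by omega)]
  have e1 : k + 1 - 1 = k := rfl
  have e2 : k + 1 - k = 1 := by omega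
  rw [e1, e2, fseq_of_le le_rfl, fseq_of_le hk]

lemma fseq_le_fseq (k : ℕ) (hk : 1 ≤ k) : ∀ m, fseq (k+1) m ≤ fseq k m := by
  intro m
  induction m using Nat.strong_induction_on with
  | _ m ih =>
    by_cases h : m ≤ k
    · rw [fseq_of_le h, fseq_of_le (by omega)]
    · by_cases h2 : m = k + 1
      · subst h2
        rw [fseq_of_le le_rfl, fseq_kp1 k hk]
        omega
      · rw [fseq_of_gt (show 1 ≤ k+1 by omega) (show k+1 < m by omega),
            fseq_of_gt hk (show k < m by omega)]
        have i1 := ih (m-1) (by omega)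
        have i2 := ih (m-(k+1)) (by omega)
        have i3 : fseq k (m-(k+1)) ≤ fseq k (m-k) := fseq_mono k hk (by omega)
        omega

lemma fseq_lt_fseq (k : ℕ) (hk : 1 ≤ k) : ∀ m, k + 1 ≤ m → fseq (k+1) m + 1 ≤ fseq k m := by
  intro m hm
  induction m, hm using Nat.le_induction with
  | base =>
    rw [fseq_of_le le_rfl, fseq_kp1 k hk]
  | succ m hm ih =>
    rw [fseq_of_gt (show 1 ≤ k+1 by omega) (show k+1 < m+1 by omega),
        fseq_of_gt hk (show k < m+1 by omega)]
    have e1 : m + 1 - 1 = m := rfl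
    have e2 : m + 1 - (k+1) = m - k := by omega
    rw [e1, e2]
    have i2 : fseq (k+1) (m-k) ≤ fseq k (m-k) := fseq_le_fseq k hk (m-k)
    have i3 : fseq k (m-k) ≤ fseq k (m+1-k) := fseq_mono k hk (by omega)
    omega

lemma partA (k : ℕ) (hk : 1 ≤ k) : ∀ j, j ≤ 2*k → fseq (k+1) (j+1) = fseq k j + 1 := by
  intro j
  induction j using Nat.strong_induction_on with
  | _ j ih =>
    intro hj
    by_cases h : j ≤ k
    · rw [fseq_of_le (show j + 1 ≤ k + 1 by omega), fseq_of_le h]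
    · have h1 := ih (j-1) (by omega) (by omega)
      rw [show j-1+1 = j by omega] at h1
      have h2 : fseq (k+1) (j - k) = j - k + 1 := fseq_of_le (by omega)
      have h3 : fseq k (j - k) = j - k + 1 := fseq_of_le (by omega)
      have e1 : fseq (k+1) (j+1) = fseq (k+1) (j+1-1) + fseq (k+1) (j+1-(k+1)) :=
        fseq_of_gt (by omega) (by omega)
      rw [show j+1-1 = j from rfl, show j+1-(k+1) = j-k by omega] at e1
      have e2 : fseq k j = fseq k (j-1) + fseq k (j-k) := fseq_of_gt hk (by omega)
      omega

lemma partE (k : ℕ) (hk : 1 ≤ k) : ∀ t, t ≤ k → fseq k (k+t) = fseq (k+1) (k+t) + t := by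
  intro t
  induction t with
  | zero =>
    intro _
    rw [fseq_of_le (by omega), fseq_of_le (by omega)]
  | succ t ih =>
    intro ht
    by_cases h : t = 0
    · subst h
      rw [fseq_kp1 k hk, fseq_of_le (show k + 1 ≤ k + 1 by omega)]
    · have iht := ih (by omega)
      have e1 : fseq k (k+(t+1)) = fseq k (k+t) + fseq k (t+1) := by
        have := fseq_of_gt hk (show k < k+(t+1) by omega)
        rw [show k+(t+1)-1 = k+t by omega, show k+(t+1)-k = t+1 by omega] at this
        exact this
      have e2 : fseq (k+1) (k+(t+1)) = fseq (k+1) (k+t) + fseq (k+1) t := by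
        have := fseq_of_gt (show 1 ≤ k+1 by omega) (show k+1 < k+(t+1) by omega)
        rw [show k+(t+1)-1 = k+t by omega, show k+(t+1)-(k+1) = t by omega] at this
        exact this
      rw [e1, e2, fseq_of_le (show t+1 ≤ k by omega), fseq_of_le (show t ≤ k+1 by omega)]
      omega

lemma partB (k : ℕ) (hk : 1 ≤ k) : ∀ t, t ≤ k →
    2 * fseq (k+1) (2*k+t+1) + t*(t+1) = 2 * fseq k (2*k+t) + 2 := by
  intro t
  induction t with
  | zero =>
    intro _
    have := partA k hk (2*k) le_rfl
    rw [show 2*k+0+1 = 2*k+1 by omega, show 2*k+0 = 2*k by omega, this]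
    ring
  | succ t ih =>
    intro ht
    have iht := ih (by omega)
    have e1 : fseq k (2*k+(t+1)) = fseq k (2*k+t) + fseq k (k+(t+1)) := by
      have := fseq_of_gt hk (show k < 2*k+(t+1) by omega)
      rw [show 2*k+(t+1)-1 = 2*k+t by omega, show 2*k+(t+1)-k = k+(t+1) by omega] at this
      exact this
    have e2 : fseq (k+1) (2*k+(t+1)+1) = fseq (k+1) (2*k+t+1) + fseq (k+1) (k+(t+1)) := by
      have := fseq_of_gt (show 1 ≤ k+1 by omega) (show k+1 < 2*k+(t+1)+1 by omega)
      rw [show 2*k+(t+1)+1-1 = 2*k+t+1 by omega,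
          show 2*k+(t+1)+1-(k+1) = k+(t+1) by omega] at this
      exact this
    have e3 := partE k hk (t+1) ht
    have hr : (t+1)*(t+1+1) = t*(t+1) + 2*(t+1) := by ring
    omega

lemma partD (k : ℕ) (hk : 1 ≤ k) : ∀ j, 2*k+1 ≤ j →
    fseq (k+1) (j+1) + (j - (2*k+1)) ≤ fseq k j := by
  intro j hj
  induction j, hj using Nat.le_induction with
  | base =>
    have := partB k hk 1 hk
    rw [show 2*k+1+1 = 2*k+2 by omega] at this
    have e : 2*k+1 - (2*k+1) = 0 := by omega
    rw [e, show 2*k+1+1 = 2*k+2 by omega]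
    omega
  | succ j hj ih =>
    have e1 : fseq k (j+1) = fseq k j + fseq k (j+1-k) := by
      have := fseq_of_gt hk (show k < j+1 by omega)
      rw [show j+1-1 = j from rfl] at this
      exact this
    have e2 : fseq (k+1) (j+1+1) = fseq (k+1) (j+1) + fseq (k+1) (j+1-k) := by
      have := fseq_of_gt (show 1 ≤ k+1 by omega) (show k+1 < j+1+1 by omega)
      rw [show j+1+1-1 = j+1 from rfl, show j+1+1-(k+1) = j+1-k by omega] at this
      exact this
    have e3 : fseq (k+1) (j+1-k) + 1 ≤ fseq k (j+1-k) :=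
      fseq_lt_fseq k hk (j+1-k) (by omega)
    omega

theorem stmt18 (k : ℕ) (hk : 1 ≤ k) :
    (∀ j, j ≤ 2 * k → ((Lk (k + 1))^[j + 1] 1 : ℚ) - ((Lk k)^[j] 1 : ℚ) = 1) ∧
    (∀ j, 2 * k ≤ j → j ≤ 3 * k →
      ((Lk (k + 1))^[j + 1] 1 : ℚ) - ((Lk k)^[j] 1 : ℚ) =
        -(((j : ℚ) - 2 * k - 1) * ((j : ℚ) - 2 * k + 2)) / 2) ∧
    (Lk (k + 1))^[2 * k + 2] 1 = (Lk k)^[2 * k + 1] 1 ∧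
    (∀ j, 2 * k + 2 ≤ j → (Lk (k + 1))^[j + 1] 1 < (Lk k)^[j] 1) := by
  refine ⟨?_, ?_, ?_, ?_⟩
  · intro j hj
    rw [Lk_iter (k+1) (by omega), Lk_iter k hk, partA k hk j hj]
    push_cast
    ring
  · intro j h1 h2
    obtain ⟨t, ht, rfl⟩ : ∃ t, t ≤ k ∧ j = 2*k + t := ⟨j - 2*k, by omega, by omega⟩
    rw [Lk_iter (k+1) (by omega), Lk_iter k hk]
    have hb : (2 * fseq (k+1) (2*k+t+1) + t*(t+1) : ℚ) = 2 * fseq k (2*k+t) + 2 := by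
      exact_mod_cast partB k hk t ht
    push_cast
    push_cast at hb
    linear_combination hb / 2
  · rw [Lk_iter (k+1) (by omega), Lk_iter k hk]
    have := partB k hk 1 hk
    rw [show 2*k+1+1 = 2*k+2 by omega] at this
    omega
  · intro j hj
    rw [Lk_iter (k+1) (by omega), Lk_iter k hk]
    have := partD k hk j (by omega)
    omega
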